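/- With the notation of the parametrized Hamiltonian system: for pairwise distinct constants a_1,…,a_n, define H_i = (x^i)²·Σ_j p_j² − Σ_{j≠i} (a_i/(a_i−a_j))·(x^i p_j − x^j p_i)². Then Σ_i H_i/(1+s·a_i) = K(s)·L(s) + M(s)² = H(s) for all s with 1+s·a_i ≠ 0 for all i. -/

import Mathlib

open Finset

lemma antisym_sum_zero {n : ℕ} (f : Fin n → Fin n → ℝ)
    (h : ∀ i j, f i j + f j i = 0) : ∑ i, ∑ j, f i j = 0 := by
  have h1 : (∑ i, ∑ j, f i j) = ∑ i, ∑ j, f j i := Finset.sum_comm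
  have h2 : ((∑ i, ∑ j, f i j) + ∑ i, ∑ j, f j i) = 0 := by
    rw [← Finset.sum_add_distrib]
    have : ∀ i : Fin n, ((∑ j, f i j) + ∑ j, f j i) = 0 := by
      intro i
      rw [← Finset.sum_add_distrib]
      simp [h]
    simp [this]
  linarith [h1, h2]

/-- Partial fraction decomposition of `H(s) = K(s)L(s) + M(s)²` into the conserved
quantities `H_i`: for pairwise distinct `a_i` and `1 + s·a_i ≠ 0` for all `i`,
`∑ i H_i/(1+s·a_i) = K(s)·L(s) + M(s)²`. -/
theorem stmt2 {n : ℕ} (a : Fin n → ℝ) (hdist : ∀ i j, i ≠ j → a i ≠ a j)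
    (s : ℝ) (hs : ∀ i, 1 + s * a i ≠ 0) (x p : Fin n → ℝ) :
    (∑ i, ((x i) ^ 2 * ∑ j, (p j) ^ 2
        - ∑ j ∈ Finset.univ.erase i,
            (a i / (a i - a j)) * (x i * p j - x j * p i) ^ 2) / (1 + s * a i))
      = (∑ i, (x i) ^ 2 / (1 + s * a i)) * (∑ i, s * a i * (p i) ^ 2 / (1 + s * a i))
        + (∑ i, p i * x i / (1 + s * a i)) ^ 2 := by
  set L : Fin n → Fin n → ℝ := fun i j =>
    (x i) ^ 2 * (p j) ^ 2 / (1 + s * a i)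
      - (a i / (a i - a j)) * (x i * p j - x j * p i) ^ 2 / (1 + s * a i) with hLdef
  set R : Fin n → Fin n → ℝ := fun i j =>
    (x i) ^ 2 / (1 + s * a i) * (s * a j * (p j) ^ 2 / (1 + s * a j))
      + (p i * x i / (1 + s * a i)) * (p j * x j / (1 + s * a j)) with hRdef
  have hL : (∑ i, ((x i) ^ 2 * ∑ j, (p j) ^ 2
        - ∑ j ∈ Finset.univ.erase i,
            (a i / (a i - a j)) * (x i * p j - x j * p i) ^ 2) / (1 + s * a i))
      = ∑ i, ∑ j, L i j := by
    refine Finset.sum_congr rfl fun i _ => ?_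
    have h0 : (fun j => (a i / (a i - a j)) * (x i * p j - x j * p i) ^ 2) i = 0 := by
      simp
    rw [Finset.sum_erase (f := fun j => (a i / (a i - a j)) * (x i * p j - x j * p i) ^ 2) Finset.univ h0, sub_div, Finset.mul_sum, Finset.sum_div, Finset.sum_div,
      ← Finset.sum_sub_distrib]
  have hR : ((∑ i, (x i) ^ 2 / (1 + s * a i)) * (∑ i, s * a i * (p i) ^ 2 / (1 + s * a i))
        + (∑ i, p i * x i / (1 + s * a i)) ^ 2)
      = ∑ i, ∑ j, R i j := by
    rw [sq, Finset.sum_mul_sum, Finset.sum_mul_sum, ← Finset.sum_add_distrib]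
    refine Finset.sum_congr rfl fun i _ => ?_
    rw [← Finset.sum_add_distrib]
  rw [hL, hR, ← sub_eq_zero, ← Finset.sum_sub_distrib]
  have : ∀ i : Fin n, ((∑ j, L i j) - ∑ j, R i j) = ∑ j, (L i j - R i j) :=
    fun i => (Finset.sum_sub_distrib (L i) (R i)).symm
  simp only [this]
  apply antisym_sum_zero
  intro i j
  by_cases h : i = j
  · subst h
    have hui := hs i
    simp only [hLdef, hRdef, sub_self, div_zero, zero_mul, zero_div, sub_zero, mul_self_eq_zero]
    field_simp
    ring
  · have ha : a i - a j ≠ 0 := sub_ne_zero.mpr (hdist i j h)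
    have ha' : a j - a i ≠ 0 := sub_ne_zero.mpr (hdist j i (Ne.symm h))
    have hui := hs i
    have huj := hs j
    simp only [hLdef, hRdef]
    field_simp
    ring
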